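/- (Segre type [(24)], first subcase) Let n = 3 with coordinates (u¹,u²,u³), and let U = {u ∈ ℝ³ : 2u¹ + (u³)² > 0}. Define the symmetric metric g by g₁₁ = 1, g₁₂ = 0, g₁₃ = u³, g₂₂ = 1, g₂₃ = 0, g₃₃ = −2u¹; then det g = −2u¹ − (u³)² < 0 on U. Define c_{ijk} := (1/3)(∂_j g_{ik} − ∂_k g_{ij}) and the skew-symmetric field w by w₁₂ = w₂₃ = 0 and w₃₁ = 1/√(2u¹ + (u³)²) (with w_{ji} = −w_{ij}, w_{ii} = 0). Then (g, c, w) satisfies conditions (cond1) on U. -/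

import Mathlib

open scoped BigOperators

/-- Partial derivative `∂_k f` in the `k`-th coordinate direction. -/
noncomputable def pd {n : ℕ} (k : Fin n) (f : (Fin n → ℝ) → ℝ) (u : Fin n → ℝ) : ℝ :=
  fderiv ℝ f u (Pi.single k 1)

/-- Conditions (cond1) for a triple `(g, c, w)` on a set `U ⊆ ℝⁿ`:
`g` is the (lower-index) metric `g_{ij}`, `c` are the lowered coefficients `c_{ijk}`,
`w` is the skew-symmetric 2-form `w_{ij}`, and `c^s_{jk} := g^{si} c_{ijk}` is computed
via the pointwise inverse matrix `(g u)⁻¹`. -/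
def Cond1 {n : ℕ} (U : Set (Fin n → ℝ))
    (g : (Fin n → ℝ) → Matrix (Fin n) (Fin n) ℝ)
    (c : (Fin n → ℝ) → Fin n → Fin n → Fin n → ℝ)
    (w : (Fin n → ℝ) → Matrix (Fin n) (Fin n) ℝ) : Prop :=
  ∀ u ∈ U,
    (∀ i j k, pd k (fun x => g x i j) u + c u i j k + c u j i k = 0) ∧
    (∀ i j k, c u i j k + c u i k j = 0) ∧
    (∀ i j k, pd k (fun x => g x i j) u + pd i (fun x => g x j k) u
        + pd j (fun x => g x k i) u = 0) ∧
    (∀ i j, w u i j + w u j i = 0) ∧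
    (∀ i j l, pd l (fun x => w x i j) u
        = ∑ s, (∑ a, (g u)⁻¹ s a * c u a i j) * w u s l) ∧
    (∀ m l p k, pd k (fun x => c x p m l) u
        + ∑ s, (∑ a, (g u)⁻¹ s a * c u a m l) * c u s p k + w u m l * w u p k = 0)

-- auxiliary

lemma pd_eq {n : ℕ} {f : (Fin n → ℝ) → ℝ} {u : Fin n → ℝ} {L : (Fin n → ℝ) →L[ℝ] ℝ}
    (h : HasFDerivAt f L u) (k : Fin n) : pd k f u = L (Pi.single k 1) := by
  rw [pd, h.fderiv]

lemma pd_const {n : ℕ} (a : ℝ) (k : Fin n) (u : Fin n → ℝ) : pd k (fun _ => a) u = 0 := by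
  simp [pd]

lemma pd_proj {n : ℕ} (i k : Fin n) (u : Fin n → ℝ) :
    pd k (fun x => x i) u = if i = k then 1 else 0 := by
  rw [pd_eq (hasFDerivAt_apply i u)]
  simp [Pi.single_apply]

lemma pd_neg2x0 (k : Fin 3) (u : Fin 3 → ℝ) :
    pd k (fun x : Fin 3 → ℝ => -(2 * x 0)) u = if (0 : Fin 3) = k then -2 else 0 := by
  have h : HasFDerivAt (fun x : Fin 3 → ℝ => -(2 * x 0))
      (-((2:ℝ) • (ContinuousLinearMap.proj 0 : (Fin 3 → ℝ) →L[ℝ] ℝ))) u :=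
    ((hasFDerivAt_apply 0 u).const_mul 2).neg
  rw [pd_eq h]
  simp [Pi.single_apply]
  split <;> norm_num

/-- The constant field `c_{ijk}`. -/
noncomputable def Cc : Fin 3 → Fin 3 → Fin 3 → ℝ :=
![![![0,0,0],![0,0,0],![0,0,0]],
  ![![0,0,0],![0,0,0],![0,0,0]],
  ![![0,0,-1],![0,0,0],![1,0,0]]]

/-- `∂_k g_{ij}`. -/
noncomputable def Gd : Fin 3 → Fin 3 → Fin 3 → ℝ :=
![![![0,0,0],![0,0,0],![0,0,1]],
  ![![0,0,0],![0,0,0],![0,0,0]],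
  ![![0,0,1],![0,0,0],![-2,0,0]]]

lemma Cc0 (j k : Fin 3) : Cc 0 j k = 0 := by
  fin_cases j <;> fin_cases k <;> simp [Cc]

lemma Cc1 (j k : Fin 3) : Cc 1 j k = 0 := by
  fin_cases j <;> fin_cases k <;> simp [Cc]

section main
variable (u : Fin 3 → ℝ)

lemma pdg (i j k : Fin 3) :
    pd k (fun x : Fin 3 → ℝ =>
      (!![1, 0, x 2; 0, 1, 0; x 2, 0, -(2 * x 0)] : Matrix (Fin 3) (Fin 3) ℝ) i j) u
      = Gd i j k := by
  fin_cases i <;> fin_cases j <;> fin_cases k <;>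
    simp [Matrix.cons_val_zero, Matrix.cons_val_one, Matrix.head_cons,
      Matrix.cons_val_two, Matrix.tail_cons, Matrix.vecHead, Matrix.vecTail, Gd, pd_const, pd_proj, pd_neg2x0]

end main

lemma Cc_eq (i j k : Fin 3) : (1/3 : ℝ) * (Gd i k j - Gd i j k) = Cc i j k := by
  fin_cases i <;> fin_cases j <;> fin_cases k <;>
    norm_num [Gd, Cc, Matrix.cons_val_zero, Matrix.cons_val_one, Matrix.head_cons,
      Matrix.cons_val_two, Matrix.tail_cons, Matrix.vecHead, Matrix.vecTail]

lemma hasFDerivAt_invsqrt (u : Fin 3 → ℝ) (hq : 0 < 2 * u 0 + u 2 ^ 2) :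
    HasFDerivAt (fun x : Fin 3 → ℝ => 1 / Real.sqrt (2 * x 0 + x 2 ^ 2))
      ((-(1 / (2 * Real.sqrt (2 * u 0 + u 2 ^ 2))) / Real.sqrt (2 * u 0 + u 2 ^ 2) ^ 2) •
        ((2:ℝ) • (ContinuousLinearMap.proj 0 : (Fin 3 → ℝ) →L[ℝ] ℝ)
          + (2 * u 2) • (ContinuousLinearMap.proj 2 : (Fin 3 → ℝ) →L[ℝ] ℝ))) u := by
  have hs0 : Real.sqrt (2 * u 0 + u 2 ^ 2) ≠ 0 := (Real.sqrt_pos.mpr hq).ne'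
  have hf : HasFDerivAt (fun x : Fin 3 → ℝ => 2 * x 0 + x 2 ^ 2)
      ((2:ℝ) • (ContinuousLinearMap.proj 0 : (Fin 3 → ℝ) →L[ℝ] ℝ)
        + (2 * u 2) • (ContinuousLinearMap.proj 2 : (Fin 3 → ℝ) →L[ℝ] ℝ)) u := by
    have h0 : HasFDerivAt (fun x : Fin 3 → ℝ => 2 * x 0)
        ((2:ℝ) • (ContinuousLinearMap.proj 0 : (Fin 3 → ℝ) →L[ℝ] ℝ)) u :=
      (hasFDerivAt_apply (𝕜 := ℝ) (0:Fin 3) u).const_mul (2:ℝ)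
    have h2 : HasFDerivAt (fun x : Fin 3 → ℝ => x 2 ^ 2)
        ((2 * u 2 : ℝ) • (ContinuousLinearMap.proj 2 : (Fin 3 → ℝ) →L[ℝ] ℝ)) u := by
      have := (hasDerivAt_pow 2 (u 2)).comp_hasFDerivAt u (hasFDerivAt_apply (𝕜 := ℝ) (2:Fin 3) u)
      norm_num at this
      simpa [Function.comp_def] using this
    exact h0.add h2
  have hg1 : HasDerivAt (fun y : ℝ => 1 / Real.sqrt y)
      (-(1 / (2 * Real.sqrt (2 * u 0 + u 2 ^ 2))) / Real.sqrt (2 * u 0 + u 2 ^ 2) ^ 2)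
      (2 * u 0 + u 2 ^ 2) := by
    simpa [one_div, Pi.inv_def] using (Real.hasDerivAt_sqrt hq.ne').inv hs0
  have := hg1.comp_hasFDerivAt u hf
  simpa [Function.comp_def] using this

lemma pd_invsqrt (u : Fin 3 → ℝ) (hq : 0 < 2 * u 0 + u 2 ^ 2) (l : Fin 3) :
    pd l (fun x : Fin 3 → ℝ => 1 / Real.sqrt (2 * x 0 + x 2 ^ 2)) u
      = -(2 * (if (0:Fin 3) = l then (1:ℝ) else 0) + 2 * u 2 * (if (2:Fin 3) = l then 1 else 0))
        / (2 * (2 * u 0 + u 2 ^ 2) * Real.sqrt (2 * u 0 + u 2 ^ 2)) := by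
  have hs0 : Real.sqrt (2 * u 0 + u 2 ^ 2) ≠ 0 := (Real.sqrt_pos.mpr hq).ne'
  have hsq : Real.sqrt (2 * u 0 + u 2 ^ 2) ^ 2 = 2 * u 0 + u 2 ^ 2 := Real.sq_sqrt hq.le
  rw [pd_eq (hasFDerivAt_invsqrt u hq)]
  simp only [ContinuousLinearMap.smul_apply, ContinuousLinearMap.add_apply,
    ContinuousLinearMap.proj_apply, Pi.single_apply, smul_eq_mul]
  set s := Real.sqrt (2 * u 0 + u 2 ^ 2) with hs
  rw [← hsq]
  field_simp

lemma ginv_eq (u : Fin 3 → ℝ) (hq : 0 < 2 * u 0 + u 2 ^ 2) :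
    (!![1, 0, u 2; 0, 1, 0; u 2, 0, -(2 * u 0)] : Matrix (Fin 3) (Fin 3) ℝ)⁻¹
      = !![2 * u 0 / (2 * u 0 + u 2 ^ 2), 0, u 2 / (2 * u 0 + u 2 ^ 2);
           0, 1, 0;
           u 2 / (2 * u 0 + u 2 ^ 2), 0, -(1 / (2 * u 0 + u 2 ^ 2))] := by
  have hq' : 2 * u 0 + u 2 ^ 2 ≠ 0 := hq.ne'
  apply Matrix.inv_eq_right_inv
  ext i j
  fin_cases i <;> fin_cases j <;>
    simp [Matrix.mul_apply, Fin.sum_univ_three, Matrix.cons_val_zero, Matrix.cons_val_one,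
        Matrix.head_cons, Matrix.cons_val_two, Matrix.tail_cons, Matrix.vecHead, Matrix.vecTail,
        Matrix.one_apply] <;>
    field_simp <;> ring

lemma Cc2 (j k : Fin 3) :
    Cc 2 j k = (if j = 0 ∧ k = 2 then (-1:ℝ) else if j = 2 ∧ k = 0 then 1 else 0) := by
  fin_cases j <;> fin_cases k <;>
    norm_num [Cc, Fin.ext_iff, Matrix.cons_val_zero, Matrix.cons_val_one, Matrix.head_cons,
      Matrix.cons_val_two, Matrix.tail_cons, Matrix.vecHead, Matrix.vecTail]


set_option maxHeartbeats 1000000 in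
/-- Segre type [(24)], first subcase. With `(u¹,u²,u³) = (u 0, u 1, u 2)`
and `U = {u : 2u¹ + (u³)² > 0}`, the metric `g = !![1,0,u³; 0,1,0; u³,0,−2u¹]`
(with `det g = −2u¹ − (u³)² < 0` on `U`), `c_{ijk} = (1/3)(∂_j g_{ik} − ∂_k g_{ij})`
and the skew form with `w₁₂ = w₂₃ = 0`, `w₃₁ = 1/√(2u¹ + (u³)²)` satisfy (cond1) on `U`. -/
theorem segre_24_first_satisfies_cond1
    (U : Set (Fin 3 → ℝ)) (hU : U = {u | 0 < 2 * u 0 + (u 2) ^ 2})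
    (g : (Fin 3 → ℝ) → Matrix (Fin 3) (Fin 3) ℝ)
    (hg : g = fun u => !![1, 0, u 2;
                          0, 1, 0;
                          u 2, 0, -(2 * u 0)])
    (c : (Fin 3 → ℝ) → Fin 3 → Fin 3 → Fin 3 → ℝ)
    (hc : c = fun u i j k =>
      (1 / 3) * (pd j (fun x => g x i k) u - pd k (fun x => g x i j) u))
    (w : (Fin 3 → ℝ) → Matrix (Fin 3) (Fin 3) ℝ)
    (hw : w = fun u =>
      !![0, 0, -(1 / Real.sqrt (2 * u 0 + (u 2) ^ 2));
         0, 0, 0;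
         1 / Real.sqrt (2 * u 0 + (u 2) ^ 2), 0, 0]) :
    (∀ u ∈ U, (g u).det = -(2 * u 0) - (u 2) ^ 2 ∧ (g u).det < 0) ∧
    Cond1 U g c w := by
  subst hU hg hc hw
  constructor
  · intro u hu
    have hq : 0 < 2 * u 0 + u 2 ^ 2 := hu
    have hdet : (!![1, 0, u 2; 0, 1, 0; u 2, 0, -(2 * u 0)] : Matrix (Fin 3) (Fin 3) ℝ).det
        = -(2 * u 0) - u 2 ^ 2 := by
      simp [Matrix.det_fin_three, Matrix.cons_val_zero, Matrix.cons_val_one, Matrix.head_cons,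
        Matrix.cons_val_two, Matrix.tail_cons, Matrix.vecHead, Matrix.vecTail]
      ring
    exact ⟨hdet, by rw [hdet]; linarith⟩
  · intro u hu
    have hq : 0 < 2 * u 0 + u 2 ^ 2 := hu
    have hs0 : Real.sqrt (2 * u 0 + u 2 ^ 2) ≠ 0 := (Real.sqrt_pos.mpr hq).ne'
    have hss : Real.sqrt (2 * u 0 + u 2 ^ 2) * Real.sqrt (2 * u 0 + u 2 ^ 2)
        = 2 * u 0 + u 2 ^ 2 := Real.mul_self_sqrt hq.le
    have hcC : ∀ (x : Fin 3 → ℝ) (i j k : Fin 3),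
        (1 / 3 : ℝ) * (pd j (fun y : Fin 3 → ℝ =>
            (!![1, 0, y 2; 0, 1, 0; y 2, 0, -(2 * y 0)] : Matrix (Fin 3) (Fin 3) ℝ) i k) x
          - pd k (fun y : Fin 3 → ℝ =>
            (!![1, 0, y 2; 0, 1, 0; y 2, 0, -(2 * y 0)] : Matrix (Fin 3) (Fin 3) ℝ) i j) x)
          = Cc i j k := by
      intro x i j k
      rw [pdg, pdg, Cc_eq]
    have hwC : ∀ (x : Fin 3 → ℝ) (i j : Fin 3),
        (!![0, 0, -(1 / Real.sqrt (2 * x 0 + x 2 ^ 2));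
            0, 0, 0;
            1 / Real.sqrt (2 * x 0 + x 2 ^ 2), 0, 0] : Matrix (Fin 3) (Fin 3) ℝ) i j
          = Cc 2 i j * (1 / Real.sqrt (2 * x 0 + x 2 ^ 2)) := by
      intro x i j
      fin_cases i <;> fin_cases j <;>
        norm_num [Cc, Matrix.cons_val_zero, Matrix.cons_val_one, Matrix.head_cons,
          Matrix.cons_val_two, Matrix.tail_cons, Matrix.vecHead, Matrix.vecTail]
    have hginv := ginv_eq u hq
    refine ⟨?_, ?_, ?_, ?_, ?_, ?_⟩
    · intro i j k
      beta_reduce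
      rw [hcC, hcC, pdg]
      fin_cases i <;> fin_cases j <;> fin_cases k <;>
        norm_num [Gd, Cc, Matrix.cons_val_zero, Matrix.cons_val_one, Matrix.head_cons,
          Matrix.cons_val_two, Matrix.tail_cons, Matrix.vecHead, Matrix.vecTail]
    · intro i j k
      beta_reduce
      rw [hcC, hcC]
      fin_cases i <;> fin_cases j <;> fin_cases k <;>
        norm_num [Cc, Matrix.cons_val_zero, Matrix.cons_val_one, Matrix.head_cons,
          Matrix.cons_val_two, Matrix.tail_cons, Matrix.vecHead, Matrix.vecTail]
    · intro i j k
      beta_reduce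
      rw [pdg, pdg, pdg]
      fin_cases i <;> fin_cases j <;> fin_cases k <;>
        norm_num [Gd, Matrix.cons_val_zero, Matrix.cons_val_one, Matrix.head_cons,
          Matrix.cons_val_two, Matrix.tail_cons, Matrix.vecHead, Matrix.vecTail]
    · intro i j
      beta_reduce
      rw [hwC, hwC, Cc2, Cc2]
      fin_cases i <;> fin_cases j <;> norm_num [Fin.ext_iff]
    · intro i j l
      beta_reduce
      have hfun : (fun x : Fin 3 → ℝ =>
          (!![0, 0, -(1 / Real.sqrt (2 * x 0 + x 2 ^ 2));
              0, 0, 0;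
              1 / Real.sqrt (2 * x 0 + x 2 ^ 2), 0, 0] : Matrix (Fin 3) (Fin 3) ℝ) i j)
          = fun x => Cc 2 i j * (1 / Real.sqrt (2 * x 0 + x 2 ^ 2)) :=
        funext fun x => hwC x i j
      rw [hfun]
      rw [pd_eq ((hasFDerivAt_invsqrt u hq).const_mul (Cc 2 i j))]
      simp only [Fin.sum_univ_three, hcC, hwC, hginv, Cc0, Cc1,
        ContinuousLinearMap.smul_apply, ContinuousLinearMap.add_apply,
        ContinuousLinearMap.proj_apply, Pi.single_apply, smul_eq_mul]
      generalize Cc 2 i j = A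
      fin_cases l <;>
        norm_num [Cc2, Fin.ext_iff, Matrix.cons_val_zero, Matrix.cons_val_one,
            Matrix.head_cons, Matrix.cons_val_two, Matrix.tail_cons, Matrix.vecHead,
            Matrix.vecTail] <;>
        field_simp <;> rw [Real.sq_sqrt hq.le] <;> ring
    · intro m l p k
      beta_reduce
      have hfun : (fun x : Fin 3 → ℝ =>
          (1 / 3 : ℝ) * (pd m (fun y : Fin 3 → ℝ =>
              (!![1, 0, y 2; 0, 1, 0; y 2, 0, -(2 * y 0)] : Matrix (Fin 3) (Fin 3) ℝ) p l) x
            - pd l (fun y : Fin 3 → ℝ =>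
              (!![1, 0, y 2; 0, 1, 0; y 2, 0, -(2 * y 0)] : Matrix (Fin 3) (Fin 3) ℝ) p m) x))
          = fun _ => Cc p m l :=
        funext fun x => hcC x p m l
      rw [hfun, pd_const]
      simp only [Fin.sum_univ_three, hcC, hwC, hginv, Cc0, Cc1]
      generalize Cc 2 m l = A
      generalize Cc 2 p k = B
      norm_num [Matrix.cons_val_zero, Matrix.cons_val_one, Matrix.head_cons,
        Matrix.cons_val_two, Matrix.tail_cons, Matrix.vecHead, Matrix.vecTail]
      field_simp
      rw [Real.sq_sqrt hq.le]
      ring
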